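/- arXiv:1208.0218 — 2 statements merged into one kernel-verified Lean document; each statement's English description precedes it below -/
import Mathlib

section
/- Let n be a positive natural number, let x be a nonzero vector in ℝⁿ, let α > 0, and let R be an n×n real matrix all of whose entries lie in the interval [-1, 1]. Then the rotation transformation increment α · (1/(n·‖x‖₂)) · R·x has Euclidean norm at most α; that is, the rotation transformation moves the point x within a closed ball (hypersphere) of radius α centered at x. -/
theorem rotation_transformation_norm_bound
    (n : ℕ) (hn : 0 < n)
    (x : EuclideanSpace ℝ (Fin n)) (hx : x ≠ 0)
    (α : ℝ) (hα : 0 < α)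
    (R : Matrix (Fin n) (Fin n) ℝ)
    (hR : ∀ i j, R i j ∈ Set.Icc (-1 : ℝ) 1) :
    ‖(α * (1 / (n * ‖x‖))) • (show EuclideanSpace ℝ (Fin n) from WithLp.toLp 2 (R.mulVec x))‖ ≤ α := by
  have hxn : (0:ℝ) < ‖x‖ := norm_pos_iff.mpr hx
  have hnn : (0:ℝ) < n := by exact_mod_cast hn
  set y : EuclideanSpace ℝ (Fin n) := (show EuclideanSpace ℝ (Fin n) from WithLp.toLp 2 (R.mulVec x))
  have habs : ∑ j, x j ^ 2 = ‖x‖ ^ 2 := by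
    rw [EuclideanSpace.norm_eq]
    rw [Real.sq_sqrt (by positivity)]
    simp [sq_abs]
  have hcomp : ∀ i, |y i| ≤ ∑ j, |x j| := by
    intro i
    calc |y i| = |∑ j, R i j * x j| := rfl
    _ ≤ ∑ j, |R i j * x j| := Finset.abs_sum_le_sum_abs _ _
    _ ≤ ∑ j, |x j| := by
        apply Finset.sum_le_sum
        intro j _
        rw [abs_mul]
        have := hR i j
        have h1 : |R i j| ≤ 1 := abs_le.mpr ⟨this.1, this.2⟩
        nlinarith [abs_nonneg (x j), abs_nonneg (R i j)]
  have hsq : (∑ j, |x j|) ^ 2 ≤ n * ‖x‖ ^ 2 := by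
    have := sq_sum_le_card_mul_sum_sq (s := Finset.univ) (f := fun j => |x j|)
    rw [← habs]
    simpa [sq_abs] using this
  have hy : ‖y‖ ≤ n * ‖x‖ := by
    rw [EuclideanSpace.norm_eq]
    have h2 : ∑ i, ‖y i‖ ^ 2 ≤ (n * ‖x‖) ^ 2 := by
      calc ∑ i, ‖y i‖ ^ 2 ≤ ∑ _i : Fin n, (∑ j, |x j|) ^ 2 := by
            apply Finset.sum_le_sum
            intro i _
            have := hcomp i
            have h0 : (0:ℝ) ≤ |y i| := abs_nonneg _
            simpa [Real.norm_eq_abs] using pow_le_pow_left₀ h0 this 2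
        _ = n * (∑ j, |x j|) ^ 2 := by simp [mul_comm]
        _ ≤ n * (n * ‖x‖ ^ 2) := by
            apply mul_le_mul_of_nonneg_left hsq (by positivity)
        _ = (n * ‖x‖) ^ 2 := by ring
    calc Real.sqrt (∑ i, ‖y i‖ ^ 2) ≤ Real.sqrt ((n * ‖x‖) ^ 2) := Real.sqrt_le_sqrt h2
      _ = n * ‖x‖ := Real.sqrt_sq (by positivity)
  rw [norm_smul]
  have hs : ‖α * (1 / (n * ‖x‖))‖ = α / (n * ‖x‖) := by
    rw [Real.norm_eq_abs, abs_of_pos (by positivity)]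
    ring
  rw [hs, div_mul_eq_mul_div, div_le_iff₀ (by positivity)]
  calc α * ‖y‖ ≤ α * (n * ‖x‖) := by
        exact mul_le_mul_of_nonneg_left hy hα.le
    _ = α * (↑n * ‖x‖) := rfl
end

section
/- Define g₄ : ℝ × ℝ → ℝ by g₄(x, y) = (y − (5.1/(4π²))x² + (5/π)x − 6)² + 10(1 − 1/(8π))·cos(x) + 10. Then the global minimum of g₄ over [−5, 10] × [0, 15] is 5/(4π) (≈ 0.3979), attained in particular at x = π and y = 5.1/4 + 1; that is, g₄(π, 5.1/4 + 1) = 5/(4π) and g₄(x, y) ≥ 5/(4π) for all x ∈ [−5, 10] and y ∈ [0, 15]. -/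
noncomputable def g₄ (x y : ℝ) : ℝ :=
  (y - (5.1 / (4 * Real.pi ^ 2)) * x ^ 2 + (5 / Real.pi) * x - 6) ^ 2
    + 10 * (1 - 1 / (8 * Real.pi)) * Real.cos x + 10

theorem g₄_global_min :
    g₄ Real.pi (5.1 / 4 + 1) = 5 / (4 * Real.pi) ∧
      ∀ x y : ℝ, x ∈ Set.Icc (-5 : ℝ) 10 → y ∈ Set.Icc (0 : ℝ) 15 →
        g₄ x y ≥ 5 / (4 * Real.pi) := by
  have hπ : Real.pi > 0 := Real.pi_pos
  have hπ3 : Real.pi > 3 := Real.pi_gt_three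
  constructor
  · unfold g₄
    rw [Real.cos_pi]
    have h1 : (5.1 / 4 + 1 - 5.1 / (4 * Real.pi ^ 2) * Real.pi ^ 2 + 5 / Real.pi * Real.pi - 6) = 0 := by
      field_simp
      ring
    rw [h1]
    field_simp
    ring
  · intro x y _ _
    unfold g₄
    have hc : Real.cos x ≥ -1 := Real.neg_one_le_cos x
    have hsq : (y - 5.1 / (4 * Real.pi ^ 2) * x ^ 2 + 5 / Real.pi * x - 6) ^ 2 ≥ 0 := sq_nonneg _
    have : 5 / (4 * Real.pi) = 10 * (1 / (8 * Real.pi)) := by field_simp; ring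
    rw [ge_iff_le, this]
    have ha : 1 / (8 * Real.pi) < 1 := by
      rw [div_lt_one (by linarith)]; linarith
    nlinarith [mul_nonneg (by linarith : (0:ℝ) ≤ 1 - 1 / (8 * Real.pi)) (by linarith : (0:ℝ) ≤ Real.cos x + 1)]
end
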